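/- Let S_1,…,S_r be finite subsets of a universe with r = (1+γ)k for some γ ∈ [0,1), and suppose |S_1 ∪ ⋯ ∪ S_r| = L. Then there exists a subcollection of k of these sets whose union has cardinality at least (1-γ)L. -/

import Mathlib

/-- Selection lemma: among r weights one can pick k whose sum is at least (k/r) of the total. -/
lemma choose_heavy (r k : ℕ) (hk : k ≤ r) (w : Fin r → ℕ) :
    ∃ T : Finset (Fin r), T.card = k ∧ k * ∑ j, w j ≤ r * ∑ j ∈ T, w j := by
  have hne : (Finset.powersetCard k (Finset.univ : Finset (Fin r))).Nonempty := by
    apply Finset.powersetCard_nonempty.mpr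
    simpa using hk
  obtain ⟨T, hTmem, hTmax⟩ := Finset.exists_max_image _ (fun T => ∑ j ∈ T, w j) hne
  rw [Finset.mem_powersetCard] at hTmem
  obtain ⟨-, hTcard⟩ := hTmem
  refine ⟨T, hTcard, ?_⟩
  -- exchange property
  have key : ∀ j' ∈ Tᶜ, ∀ j ∈ T, w j' ≤ w j := by
    intro j' hj' j hj
    rw [Finset.mem_compl] at hj'
    have hT' : (insert j' (T.erase j)) ∈ Finset.powersetCard k (Finset.univ : Finset (Fin r)) := by
      rw [Finset.mem_powersetCard]
      refine ⟨Finset.subset_univ _, ?_⟩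
      rw [Finset.card_insert_of_notMem (fun h => hj' (Finset.mem_of_mem_erase h)),
        Finset.card_erase_of_mem hj, hTcard]
      have : 1 ≤ k := by
        rcases Nat.eq_zero_or_pos k with h | h
        · exfalso; rw [h, Finset.card_eq_zero] at hTcard; simp [hTcard] at hj
        · exact h
      omega
    have hle := hTmax _ hT'
    rw [Finset.sum_insert (fun h => hj' (Finset.mem_of_mem_erase h))] at hle
    rw [← Finset.add_sum_erase T w hj] at hle
    exact le_of_add_le_add_right hle
  have hsplit : ∑ j ∈ T, w j + ∑ j ∈ Tᶜ, w j = ∑ j, w j := Finset.sum_add_sum_compl T w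
  have hcompl : Tᶜ.card = r - k := by
    rw [Finset.card_compl, hTcard]; simp
  have hbound : k * ∑ j ∈ Tᶜ, w j ≤ (r - k) * ∑ j ∈ T, w j := by
    calc k * ∑ j ∈ Tᶜ, w j = ∑ j' ∈ Tᶜ, k * w j' := by rw [Finset.mul_sum]
      _ ≤ ∑ j' ∈ Tᶜ, ∑ j ∈ T, w j := by
          apply Finset.sum_le_sum
          intro j' hj'
          calc k * w j' = ∑ j ∈ T, w j' := by rw [Finset.sum_const, hTcard, smul_eq_mul]
            _ ≤ ∑ j ∈ T, w j := Finset.sum_le_sum (fun j hj => key j' hj' j hj)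
      _ = (r - k) * ∑ j ∈ T, w j := by rw [Finset.sum_const, hcompl, smul_eq_mul]
  calc k * ∑ j, w j = k * ∑ j ∈ T, w j + k * ∑ j ∈ Tᶜ, w j := by
        rw [← Nat.mul_add, hsplit]
    _ ≤ k * ∑ j ∈ T, w j + (r - k) * ∑ j ∈ T, w j := by omega
    _ = r * ∑ j ∈ T, w j := by rw [← Nat.add_mul]; congr 1; omega

/-- Among r = (1+γ)k sets covering L elements, some k of them cover at least (1-γ)L. -/
theorem stmt_0 (n r k : ℕ) (hk : 0 < k) (hr : 0 < r) (γ : ℝ)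
    (hγ0 : 0 ≤ γ) (hγ1 : γ < 1) (hrk : (r : ℝ) = (1 + γ) * k)
    (S : Fin r → Finset (Fin n)) :
    ∃ T : Finset (Fin r), T.card = k ∧
      (1 - γ) * ((Finset.univ.biUnion S).card : ℝ) ≤ ((T.biUnion S).card : ℝ) := by
  classical
  have hkr : k ≤ r := by
    have : (k : ℝ) ≤ (r : ℝ) := by nlinarith
    exact_mod_cast this
  set U := (Finset.univ.biUnion S) with hU
  let g : Fin n → Fin r := fun x => if h : ∃ j, x ∈ S j then h.choose else ⟨0, hr⟩
  have hg : ∀ x ∈ U, x ∈ S (g x) := by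
    intro x hx
    rw [hU, Finset.mem_biUnion] at hx
    obtain ⟨j, -, hj⟩ := hx
    have h : ∃ j, x ∈ S j := ⟨j, hj⟩
    simp only [g, dif_pos h]
    exact h.choose_spec
  let w : Fin r → ℕ := fun j => (U.filter (fun x => g x = j)).card
  have hL : U.card = ∑ j, w j :=
    Finset.card_eq_sum_card_fiberwise (fun x _ => Finset.mem_univ (g x))
  obtain ⟨T, hTcard, hTsum⟩ := choose_heavy r k hkr w
  refine ⟨T, hTcard, ?_⟩
  -- sum of fibers over T is at most the card of the union over T
  have hfib : ∑ j ∈ T, w j ≤ (T.biUnion S).card := by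
    have h1 : (U.filter (fun x => g x ∈ T)).card = ∑ j ∈ T, w j := by
      rw [Finset.card_eq_sum_card_fiberwise (f := g) (s := U.filter (fun x => g x ∈ T)) (t := T)
        (fun x hx => (Finset.mem_filter.mp hx).2)]
      apply Finset.sum_congr rfl
      intro j hj
      congr 1
      rw [Finset.filter_filter]
      apply Finset.filter_congr
      intro x hx
      constructor
      · rintro ⟨-, h⟩; exact h
      · intro h; exact ⟨h ▸ hj, h⟩
    rw [← h1]
    apply Finset.card_le_card
    intro x hx
    rw [Finset.mem_filter] at hx
    rw [Finset.mem_biUnion]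
    exact ⟨g x, hx.2, hg x hx.1⟩
  have hfibR : ((∑ j ∈ T, w j : ℕ) : ℝ) ≤ ((T.biUnion S).card : ℝ) := by exact_mod_cast hfib
  have hmainR : (k : ℝ) * (U.card : ℝ) ≤ (r : ℝ) * ((∑ j ∈ T, w j : ℕ) : ℝ) := by
    rw [hL]; exact_mod_cast hTsum
  have hrpos : (0 : ℝ) < r := by exact_mod_cast hr
  have hUnn : (0 : ℝ) ≤ (U.card : ℝ) := Nat.cast_nonneg _
  have h1 : (1 - γ) * (r : ℝ) ≤ k := by nlinarith [sq_nonneg γ]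
  have : (1 - γ) * (U.card : ℝ) * r ≤ ((T.biUnion S).card : ℝ) * r := by
    nlinarith
  exact le_of_mul_le_mul_right this hrpos
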